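/- Let R₁ > 0 and let μ be a Borel probability measure on ℝ^d supported in the closed ball B̄(R₁). Then the map z ↦ γ(z, μ) is Fréchet differentiable at every z ∈ B̄(R₁), and for all z, z̃ ∈ B̄(R₁) one has ‖γ(z, μ) − γ(z̃, μ)‖ ≤ 2 R₁² ‖z − z̃‖. -/

import Mathlib

open MeasureTheory Metric
open scoped RealInnerProductSpace

set_option synthInstance.maxHeartbeats 1000000
set_option maxHeartbeats 2000000

/-- The normalisation constant `γ₂(z, μ) = ∫ exp⟨z,y⟩ dμ(y)`. -/
noncomputable def gamma2 {d : ℕ} (z : EuclideanSpace ℝ (Fin d))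
    (μ : Measure (EuclideanSpace ℝ (Fin d))) : ℝ :=
  ∫ y, Real.exp ⟪z, y⟫ ∂μ

/-- The attention map `γ(z, μ) = (∫ exp⟨z,y⟩ • y dμ(y)) / γ₂(z, μ)`. -/
noncomputable def gammaAttn {d : ℕ} (z : EuclideanSpace ℝ (Fin d))
    (μ : Measure (EuclideanSpace ℝ (Fin d))) : EuclideanSpace ℝ (Fin d) :=
  (gamma2 z μ)⁻¹ • ∫ y, Real.exp ⟪z, y⟫ • y ∂μ

section aux
variable {d : ℕ}

local notation "E" => EuclideanSpace ℝ (Fin d)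

lemma cont_exp (z : E) : Continuous fun y : E => Real.exp ⟪z, y⟫ :=
  (continuous_const.inner continuous_id).rexp

lemma key (R₁ : ℝ) (hR₁ : 0 < R₁) (μ : Measure E) [IsProbabilityMeasure μ]
    (hae : ∀ᵐ y ∂μ, ‖y‖ ≤ R₁) (z : E) :
    ∃ γ' : (E) →L[ℝ] (E), HasFDerivAt (fun w => gammaAttn w μ) γ' z ∧
      ‖γ'‖ ≤ 2 * R₁ ^ 2 := by
  -- basic integrability of the exponential weight
  have hint_exp : ∀ x : E, Integrable (fun y => Real.exp ⟪x, y⟫) μ := by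
    intro x
    refine (integrable_const (Real.exp (‖x‖ * R₁))).mono' (cont_exp x).aestronglyMeasurable ?_
    filter_upwards [hae] with y hy
    rw [Real.norm_eq_abs, abs_of_pos (Real.exp_pos _)]
    exact Real.exp_le_exp.2 ((real_inner_le_norm x y).trans
      (mul_le_mul_of_nonneg_left hy (norm_nonneg x)))
  have hint_expy : ∀ x : E, Integrable (fun y => Real.exp ⟪x, y⟫ • y) μ := by
    intro x
    refine (integrable_const (Real.exp (‖x‖ * R₁) * R₁)).mono'
      ((cont_exp x).smul continuous_id).aestronglyMeasurable ?_
    filter_upwards [hae] with y hy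
    rw [norm_smul (Real.exp ⟪x, y⟫) y, Real.norm_eq_abs, abs_of_pos (Real.exp_pos _)]
    have h1 : Real.exp ⟪x, y⟫ ≤ Real.exp (‖x‖ * R₁) :=
      Real.exp_le_exp.2 ((real_inner_le_norm x y).trans
        (mul_le_mul_of_nonneg_left hy (norm_nonneg x)))
    exact mul_le_mul h1 hy (norm_nonneg y) (Real.exp_pos _).le
  -- positivity of the denominator
  have hDpos : ∀ x : E, 0 < gamma2 x μ := by
    intro x
    have h1 : Real.exp (-(‖x‖ * R₁)) ≤ gamma2 x μ := by
      rw [show Real.exp (-(‖x‖ * R₁)) = ∫ _, Real.exp (-(‖x‖ * R₁)) ∂μ by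
        simp [measure_univ]]
      refine integral_mono_ae (integrable_const _) (hint_exp x) ?_
      filter_upwards [hae] with y hy
      refine Real.exp_le_exp.2 ?_
      have h2 := abs_real_inner_le_norm x y
      nlinarith [abs_le.1 h2, mul_le_mul_of_nonneg_left hy (norm_nonneg x)]
    exact lt_of_lt_of_le (Real.exp_pos _) h1
  -- the derivative integrands
  set FD : E → E → (E →L[ℝ] ℝ) := fun x y => Real.exp ⟪x, y⟫ • innerSL ℝ y with hFD
  set FN : E → E → (E →L[ℝ] E) := fun x y => (Real.exp ⟪x, y⟫ • innerSL ℝ y).smulRight y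
    with hFN
  have hFD_deriv : ∀ (y : E) (x : E),
      HasFDerivAt (fun w : E => Real.exp ⟪w, y⟫) (FD x y) x := by
    intro y x
    have h0 : (fun w : E => Real.exp ⟪w, y⟫) = fun w => Real.exp (innerSL ℝ y w) := by
      funext w; rw [innerSL_apply_apply, real_inner_comm]
    rw [h0]
    simp only [hFD]
    rw [real_inner_comm y x]
    exact ((innerSL ℝ y).hasFDerivAt (x := x)).exp
  have hFN_deriv : ∀ (y : E) (x : E),
      HasFDerivAt (fun w : E => Real.exp ⟪w, y⟫ • y) (FN x y) x :=
    fun y x => (hFD_deriv y x).smul_const y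
  have hFD_norm : ∀ (x y : E), ‖FD x y‖ = Real.exp ⟪x, y⟫ * ‖y‖ := by
    intro x y
    simp only [hFD]
    rw [norm_smul (Real.exp ⟪x, y⟫) (innerSL ℝ y), Real.norm_eq_abs,
      abs_of_pos (Real.exp_pos _), innerSL_apply_norm]
  have hFN_norm : ∀ (x y : E), ‖FN x y‖ = Real.exp ⟪x, y⟫ * ‖y‖ ^ 2 := by
    intro x y
    simp only [hFN]
    rw [ContinuousLinearMap.norm_smulRight_apply, norm_smul (Real.exp ⟪x, y⟫) (innerSL ℝ y),
      Real.norm_eq_abs, abs_of_pos (Real.exp_pos _), innerSL_apply_norm]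
    ring
  have hFD_cont : ∀ x : E, Continuous (FD x) := fun x =>
    (cont_exp x).smul (innerSL ℝ).continuous
  have hFN_cont : ∀ x : E, Continuous (FN x) := by
    intro x
    exact isBoundedBilinearMap_smulRight.continuous.comp ((hFD_cont x).prodMk continuous_id)
  have hexp_ball : ∀ x ∈ ball z 1, ∀ y : E, ‖y‖ ≤ R₁ →
      Real.exp ⟪x, y⟫ ≤ Real.exp ((‖z‖ + 1) * R₁) := by
    intro x hx y hy
    refine Real.exp_le_exp.2 ((real_inner_le_norm x y).trans ?_)
    have hxn : ‖x‖ ≤ ‖z‖ + 1 := by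
      have h1 : ‖x - z‖ < 1 := mem_ball_iff_norm.1 hx
      have h2 := norm_sub_norm_le x z
      linarith
    exact mul_le_mul hxn hy (norm_nonneg y) (by positivity)
  -- integrability of the derivative integrands
  have hint_FD : ∀ x : E, Integrable (FD x) μ := by
    intro x
    refine (integrable_const (Real.exp (‖x‖ * R₁) * R₁)).mono'
      (hFD_cont x).aestronglyMeasurable ?_
    filter_upwards [hae] with y hy
    rw [hFD_norm]
    have h1 : Real.exp ⟪x, y⟫ ≤ Real.exp (‖x‖ * R₁) :=
      Real.exp_le_exp.2 ((real_inner_le_norm x y).trans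
        (mul_le_mul_of_nonneg_left hy (norm_nonneg x)))
    exact mul_le_mul h1 hy (norm_nonneg y) (Real.exp_pos _).le
  have hint_FN : ∀ x : E, Integrable (FN x) μ := by
    intro x
    refine (integrable_const (Real.exp (‖x‖ * R₁) * R₁ ^ 2)).mono'
      (hFN_cont x).aestronglyMeasurable ?_
    filter_upwards [hae] with y hy
    rw [hFN_norm]
    have h1 : Real.exp ⟪x, y⟫ ≤ Real.exp (‖x‖ * R₁) :=
      Real.exp_le_exp.2 ((real_inner_le_norm x y).trans
        (mul_le_mul_of_nonneg_left hy (norm_nonneg x)))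
    have h2 : ‖y‖ ^ 2 ≤ R₁ ^ 2 := by nlinarith [norm_nonneg y]
    exact mul_le_mul h1 h2 (by positivity) (Real.exp_pos _).le
  -- derivative of the denominator
  have hD : HasFDerivAt (fun w => gamma2 w μ) (∫ y, FD z y ∂μ) z := by
    refine hasFDerivAt_integral_of_dominated_of_fderiv_le (s := ball z 1) (ball_mem_nhds z one_pos)
      (Filter.Eventually.of_forall fun x => (cont_exp x).aestronglyMeasurable) (hint_exp z)
      (hFD_cont z).aestronglyMeasurable ?_
      (integrable_const (Real.exp ((‖z‖ + 1) * R₁) * R₁)) ?_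
    · filter_upwards [hae] with y hy x hx
      rw [hFD_norm]
      exact mul_le_mul (hexp_ball x hx y hy) hy (norm_nonneg y) (Real.exp_pos _).le
    · filter_upwards with y x _
      exact hFD_deriv y x
  -- derivative of the numerator
  have hN : HasFDerivAt (fun w => ∫ y, Real.exp ⟪w, y⟫ • y ∂μ) (∫ y, FN z y ∂μ) z := by
    refine hasFDerivAt_integral_of_dominated_of_fderiv_le (s := ball z 1) (ball_mem_nhds z one_pos)
      (Filter.Eventually.of_forall fun x =>
        ((cont_exp x).smul continuous_id).aestronglyMeasurable)
      (hint_expy z) (hFN_cont z).aestronglyMeasurable ?_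
      (integrable_const (Real.exp ((‖z‖ + 1) * R₁) * R₁ ^ 2)) ?_
    · filter_upwards [hae] with y hy x hx
      rw [hFN_norm]
      have h2 : ‖y‖ ^ 2 ≤ R₁ ^ 2 := by nlinarith [norm_nonneg y]
      exact mul_le_mul (hexp_ball x hx y hy) h2 (by positivity) (Real.exp_pos _).le
    · filter_upwards with y x _
      exact hFN_deriv y x
  -- derivative of the quotient
  have hDne : gamma2 z μ ≠ 0 := (hDpos z).ne'
  have hinv : HasFDerivAt (fun w => (gamma2 w μ)⁻¹)
      ((ContinuousLinearMap.smulRight (1 : ℝ →L[ℝ] ℝ) (-(gamma2 z μ ^ 2)⁻¹)).comp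
        (∫ y, FD z y ∂μ)) z :=
    (hasFDerivAt_inv hDne).comp z hD
  have hγ : HasFDerivAt (fun w => gammaAttn w μ)
      ((gamma2 z μ)⁻¹ • (∫ y, FN z y ∂μ) +
        ((ContinuousLinearMap.smulRight (1 : ℝ →L[ℝ] ℝ) (-(gamma2 z μ ^ 2)⁻¹)).comp
          (∫ y, FD z y ∂μ)).smulRight (∫ y, Real.exp ⟪z, y⟫ • y ∂μ)) z := by
    have h1 := hinv.smul hN
    exact h1
  refine ⟨_, hγ, ?_⟩
  -- bound on the operator norm
  set Dz := gamma2 z μ with hDz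
  set Nz := ∫ y, Real.exp ⟪z, y⟫ • y ∂μ with hNz
  have hDpos' : 0 < Dz := hDpos z
  refine ContinuousLinearMap.opNorm_le_bound _ (by positivity) fun h => ?_
  have hND : ‖(∫ y, FN z y ∂μ) h‖ ≤ R₁ ^ 2 * ‖h‖ * Dz := by
    rw [ContinuousLinearMap.integral_apply (hint_FN z)]
    have hb : ∀ᵐ y ∂μ, ‖(FN z y) h‖ ≤ R₁ ^ 2 * ‖h‖ * Real.exp ⟪z, y⟫ := by
      filter_upwards [hae] with y hy
      have e1 : (FN z y) h = (Real.exp ⟪z, y⟫ * ⟪y, h⟫) • y := by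
        simp only [hFN, ContinuousLinearMap.smulRight_apply, ContinuousLinearMap.smul_apply,
          innerSL_apply_apply, smul_eq_mul]
      rw [e1, norm_smul (Real.exp ⟪z, y⟫ * ⟪y, h⟫) y, Real.norm_eq_abs, abs_mul,
        abs_of_pos (Real.exp_pos _)]
      calc Real.exp ⟪z, y⟫ * |⟪y, h⟫| * ‖y‖
          ≤ Real.exp ⟪z, y⟫ * (‖y‖ * ‖h‖) * ‖y‖ := by
            have h3 := abs_real_inner_le_norm y h
            gcongr
        _ ≤ Real.exp ⟪z, y⟫ * (R₁ * ‖h‖) * R₁ := by gcongr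
        _ = R₁ ^ 2 * ‖h‖ * Real.exp ⟪z, y⟫ := by ring
    calc ‖∫ y, (FN z y) h ∂μ‖ ≤ ∫ y, R₁ ^ 2 * ‖h‖ * Real.exp ⟪z, y⟫ ∂μ :=
          norm_integral_le_of_norm_le ((hint_exp z).const_mul _) hb
      _ = R₁ ^ 2 * ‖h‖ * Dz := by rw [integral_const_mul]; rfl
  have hDD : ‖(∫ y, FD z y ∂μ) h‖ ≤ R₁ * ‖h‖ * Dz := by
    rw [ContinuousLinearMap.integral_apply (hint_FD z)]
    have hb : ∀ᵐ y ∂μ, ‖(FD z y) h‖ ≤ R₁ * ‖h‖ * Real.exp ⟪z, y⟫ := by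
      filter_upwards [hae] with y hy
      have e2 : (FD z y) h = Real.exp ⟪z, y⟫ * ⟪y, h⟫ := by
        simp only [hFD, ContinuousLinearMap.smul_apply, innerSL_apply_apply, smul_eq_mul]
      rw [e2, Real.norm_eq_abs, abs_mul, abs_of_pos (Real.exp_pos _)]
      calc Real.exp ⟪z, y⟫ * |⟪y, h⟫|
          ≤ Real.exp ⟪z, y⟫ * (‖y‖ * ‖h‖) := by
            have h3 := abs_real_inner_le_norm y h
            gcongr
        _ ≤ Real.exp ⟪z, y⟫ * (R₁ * ‖h‖) := by gcongr
        _ = R₁ * ‖h‖ * Real.exp ⟪z, y⟫ := by ring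
    calc ‖∫ y, (FD z y) h ∂μ‖ ≤ ∫ y, R₁ * ‖h‖ * Real.exp ⟪z, y⟫ ∂μ :=
          norm_integral_le_of_norm_le ((hint_exp z).const_mul _) hb
      _ = R₁ * ‖h‖ * Dz := by rw [integral_const_mul]; rfl
  have hNzb : ‖Nz‖ ≤ R₁ * Dz := by
    have hb : ∀ᵐ y ∂μ, ‖Real.exp ⟪z, y⟫ • y‖ ≤ R₁ * Real.exp ⟪z, y⟫ := by
      filter_upwards [hae] with y hy
      rw [norm_smul (Real.exp ⟪z, y⟫) y, Real.norm_eq_abs, abs_of_pos (Real.exp_pos _)]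
      calc Real.exp ⟪z, y⟫ * ‖y‖ ≤ Real.exp ⟪z, y⟫ * R₁ := by gcongr
        _ = R₁ * Real.exp ⟪z, y⟫ := by ring
    calc ‖Nz‖ ≤ ∫ y, R₁ * Real.exp ⟪z, y⟫ ∂μ :=
          norm_integral_le_of_norm_le ((hint_exp z).const_mul _) hb
      _ = R₁ * Dz := by rw [integral_const_mul]; rfl
  simp only [ContinuousLinearMap.add_apply, ContinuousLinearMap.smul_apply,
    ContinuousLinearMap.smulRight_apply, ContinuousLinearMap.comp_apply,
    ContinuousLinearMap.one_apply, smul_eq_mul]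
  calc ‖Dz⁻¹ • (∫ y, FN z y ∂μ) h + ((∫ y, FD z y ∂μ) h * -(Dz ^ 2)⁻¹) • Nz‖
      ≤ ‖Dz⁻¹ • (∫ y, FN z y ∂μ) h‖ + ‖((∫ y, FD z y ∂μ) h * -(Dz ^ 2)⁻¹) • Nz‖ :=
        norm_add_le _ _
    _ ≤ Dz⁻¹ * (R₁ ^ 2 * ‖h‖ * Dz) + (R₁ * ‖h‖ * Dz) * (Dz ^ 2)⁻¹ * (R₁ * Dz) := by
        refine add_le_add ?_ ?_
        · rw [norm_smul Dz⁻¹ ((∫ y, FN z y ∂μ) h), Real.norm_eq_abs,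
            abs_of_pos (by positivity : (0:ℝ) < Dz⁻¹)]
          exact mul_le_mul_of_nonneg_left hND (by positivity)
        · rw [norm_smul ((∫ y, FD z y ∂μ) h * -(Dz ^ 2)⁻¹) Nz, Real.norm_eq_abs, abs_mul,
            abs_neg, abs_inv, abs_of_pos (by positivity : (0:ℝ) < Dz ^ 2)]
          have hA : |(∫ y, FD z y ∂μ) h| ≤ R₁ * ‖h‖ * Dz := by
            rw [← Real.norm_eq_abs]; exact hDD
          exact mul_le_mul (mul_le_mul_of_nonneg_right hA (by positivity)) hNzb
            (norm_nonneg _) (by positivity)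
    _ = 2 * R₁ ^ 2 * ‖h‖ := by
        have : Dz ≠ 0 := hDpos'.ne'
        field_simp
        ring
end aux

/-- If `μ` is a probability measure supported in `B̄(R₁)`, then `z ↦ γ(z,μ)` is Fréchet
differentiable at every `z ∈ B̄(R₁)` and is `2R₁²`-Lipschitz on `B̄(R₁)`. -/
theorem stmt_2 {d : ℕ} (R₁ : ℝ) (hR₁ : 0 < R₁)
    (μ : Measure (EuclideanSpace ℝ (Fin d))) [IsProbabilityMeasure μ]
    (hsupp : μ (Metric.closedBall 0 R₁) = 1) :
    (∀ z ∈ Metric.closedBall (0 : EuclideanSpace ℝ (Fin d)) R₁,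
        DifferentiableAt ℝ (fun w => gammaAttn w μ) z) ∧
      ∀ z ∈ Metric.closedBall (0 : EuclideanSpace ℝ (Fin d)) R₁,
        ∀ z' ∈ Metric.closedBall (0 : EuclideanSpace ℝ (Fin d)) R₁,
          ‖gammaAttn z μ - gammaAttn z' μ‖ ≤ 2 * R₁ ^ 2 * ‖z - z'‖ := by
  have hae : ∀ᵐ y ∂μ, ‖y‖ ≤ R₁ := by
    have hc : μ (Metric.closedBall (0 : EuclideanSpace ℝ (Fin d)) R₁)ᶜ = 0 := by
      rw [measure_compl Metric.isClosed_closedBall.measurableSet (measure_ne_top μ _), hsupp,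
        measure_univ, tsub_self]
    have h1 : ∀ᵐ y ∂μ, y ∈ Metric.closedBall (0 : EuclideanSpace ℝ (Fin d)) R₁ := by
      rw [ae_iff]
      exact hc
    filter_upwards [h1] with y hy
    simpa [mem_closedBall_zero_iff] using hy
  choose γ' hderiv hbound using key R₁ hR₁ μ hae
  refine ⟨fun z _ => (hderiv z).differentiableAt, fun z hz z' hz' => ?_⟩
  exact (convex_closedBall (0 : EuclideanSpace ℝ (Fin d)) R₁).norm_image_sub_le_of_norm_hasFDerivWithin_le
    (fun x _ => (hderiv x).hasFDerivWithinAt) (fun x _ => hbound x) hz' hz
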